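/- Every residuated difference of max-plus affine functions is max-plus convex and lower semi-continuous: for all w', w'' ∈ ℝmax^n and d', d'' ∈ ℝmax, the function u : ℝmax^n → ℝmax defined by u(x) = max(⟨w', x⟩, d') ⊖ max(⟨w'', x⟩, d'') has max-plus convex epigraph, and every lower level set {x ∈ ℝmax^n : u(x) ≤ t}, t ∈ ℝ̄, is closed in the product topology of ℝmax^n. -/

import Mathlib

noncomputable section

/-- `ℝmax = ℝ ∪ {-∞}`, the max-plus semifield. -/
abbrev Rmax := WithBot ℝ

/-- the order topology on `ℝmax`. -/
noncomputable instance : TopologicalSpace Rmax := Preorder.topology Rmax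
instance : OrderTopology Rmax := ⟨rfl⟩

/-- the embedding of `ℝmax = ℝ ∪ {-∞}` into `ℝ̄ = [-∞,+∞]`. -/
def Rmax.toE : Rmax → EReal := WithBot.recBotCoe ⊥ (fun r : ℝ => (r : EReal))

/-- max-plus scalar product `⟨w,x⟩ = max_i (w_i + x_i)` on `ℝmax^n`. -/
def mdot {n : ℕ} (w x : Fin n → Rmax) : Rmax := Finset.univ.sup fun i => w i + x i

/-- residuated difference: `a ⊖ b = a` if `a > b`, and `-∞` otherwise. -/
def rdiff (a b : Rmax) : Rmax := if b < a then a else ⊥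

/-- max-plus convexity of a subset of `ℝmax^n`. -/
def MPConvex {n : ℕ} (C : Set (Fin n → Rmax)) : Prop :=
  ∀ x ∈ C, ∀ y ∈ C, ∀ α β : Rmax, max α β = 0 →
    (fun i => max (α + x i) (β + y i)) ∈ C

/-- max-plus convexity of a subset of `ℝmax^n × ℝmax ≅ ℝmax^{n+1}`. -/
def MPConvexP {n : ℕ} (C : Set ((Fin n → Rmax) × Rmax)) : Prop :=
  ∀ p ∈ C, ∀ q ∈ C, ∀ α β : Rmax, max α β = 0 →
    ((fun i => max (α + p.1 i) (β + q.1 i)), max (α + p.2) (β + q.2)) ∈ C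

/- ### Auxiliary lemmas -/

/-- translation is continuous on `Rmax`. -/
lemma cont_const_add (c : Rmax) : Continuous fun a : Rmax => c + a := by
  induction c using WithBot.recBotCoe with
  | bot => simpa [WithBot.bot_add] using (continuous_const : Continuous fun _ : Rmax => (⊥:Rmax))
  | coe r =>
    have hmono : StrictMono (fun a : Rmax => (r : Rmax) + a) := fun a b h =>
      WithBot.add_lt_add_left (by simp) h
    have hsurj : Function.Surjective (fun a : Rmax => (r : Rmax) + a) := by
      intro b
      induction b using WithBot.recBotCoe with
      | bot => exact ⟨⊥, WithBot.add_bot _⟩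
      | coe s => exact ⟨((s - r : ℝ) : Rmax), by norm_num [← WithBot.coe_add]⟩
    exact (StrictMono.orderIsoOfSurjective _ hmono hsurj).toHomeomorph.continuous

lemma cont_sup {n : ℕ} (w : Fin n → Rmax) (s : Finset (Fin n)) :
    Continuous fun x : Fin n → Rmax => s.sup fun i => w i + x i := by
  induction s using Finset.cons_induction with
  | empty => simpa using (continuous_const : Continuous fun _ : Fin n → Rmax => (⊥:Rmax))
  | cons a s ha ih =>
    simp only [Finset.sup_cons]
    exact ((cont_const_add (w a)).comp (continuous_apply a)).max ih

lemma cont_mdot {n : ℕ} (w : Fin n → Rmax) :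
    Continuous fun x : Fin n → Rmax => mdot w x := cont_sup w Finset.univ

/-- addition distributes over finite sups in `Rmax`. -/
lemma add_finset_sup {n : ℕ} (c : Rmax) (s : Finset (Fin n)) (f : Fin n → Rmax) :
    c + s.sup f = s.sup fun i => c + f i := by
  induction s using Finset.cons_induction with
  | empty => simp [WithBot.add_bot]
  | cons a s ha ih =>
    simp only [Finset.sup_cons, add_max, ih]

/-- `mdot` is max-plus linear. -/
lemma mdot_comb {n : ℕ} (w x y : Fin n → Rmax) (α β : Rmax) :
    mdot w (fun i => max (α + x i) (β + y i)) = max (α + mdot w x) (β + mdot w y) := by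
  unfold mdot
  rw [add_finset_sup, add_finset_sup, ← Finset.sup_sup]
  congr 1
  funext i
  simp only [Pi.sup_apply, add_max]
  rw [add_left_comm (w i) α, add_left_comm (w i) β]

lemma comb_const (d α β : Rmax) (h : max α β = 0) : max (α + d) (β + d) = d := by
  rw [max_add_add_right, h, zero_add]

lemma rdiff_of_lt {a b : Rmax} (h : b < a) : rdiff a b = a := if_pos h

lemma rdiff_of_le {a b : Rmax} (h : ¬ b < a) : rdiff a b = ⊥ := if_neg h

/-- key inequality: `rdiff` of combinations. -/
lemma rdiff_comb (a₁ b₁ a₂ b₂ α β : Rmax) :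
    rdiff (max (α + a₁) (β + a₂)) (max (α + b₁) (β + b₂)) ≤
      max (α + rdiff a₁ b₁) (β + rdiff a₂ b₂) := by
  by_cases h : max (α + b₁) (β + b₂) < max (α + a₁) (β + a₂)
  · rw [rdiff_of_lt h]
    rcases le_total (β + a₂) (α + a₁) with hle | hle
    · rw [max_eq_left hle] at h ⊢
      have hb : b₁ < a₁ := by
        by_contra hc
        push_neg at hc
        exact absurd ((le_max_left _ _).trans_lt h) (not_lt.2 (add_le_add_right hc α))
      calc α + a₁ = α + rdiff a₁ b₁ := by rw [rdiff_of_lt hb]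
        _ ≤ _ := le_max_left _ _
    · rw [max_eq_right hle] at h ⊢
      have hb : b₂ < a₂ := by
        by_contra hc
        push_neg at hc
        exact absurd ((le_max_right _ _).trans_lt h) (not_lt.2 (add_le_add_right hc β))
      calc β + a₂ = β + rdiff a₂ b₂ := by rw [rdiff_of_lt hb]
        _ ≤ _ := le_max_right _ _
  · rw [rdiff_of_le h]
    exact bot_le

lemma rdiff_le_iff (a b s : Rmax) : rdiff a b ≤ s ↔ a ≤ max b s := by
  by_cases h : b < a
  · rw [rdiff_of_lt h]
    constructor
    · intro h1; exact h1.trans (le_max_right _ _)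
    · intro h1
      exact (le_max_iff.mp h1).resolve_left (not_le.2 h)
  · rw [rdiff_of_le h]
    exact ⟨fun _ => (not_lt.1 h).trans (le_max_left _ _), fun _ => bot_le⟩

lemma toE_le_coe (a : Rmax) (r : ℝ) : Rmax.toE a ≤ (r : EReal) ↔ a ≤ (r : Rmax) := by
  induction a using WithBot.recBotCoe with
  | bot => simp [Rmax.toE]
  | coe x => simp [Rmax.toE, WithBot.recBotCoe, EReal.coe_le_coe_iff, WithBot.coe_le_coe]

lemma toE_le_bot (a : Rmax) : Rmax.toE a ≤ (⊥ : EReal) ↔ a ≤ ⊥ := by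
  induction a using WithBot.recBotCoe with
  | bot => simp [Rmax.toE]
  | coe x => simp [Rmax.toE, WithBot.recBotCoe]

/-- **Every residuated difference of max-plus affine functions is max-plus
convex (its epigraph is max-plus convex) and lower semi-continuous (its lower
level sets are closed).** -/
theorem stmt19 {n : ℕ} (w' w'' : Fin n → Rmax) (d' d'' : Rmax)
    (u : (Fin n → Rmax) → Rmax)
    (hu : ∀ x, u x = rdiff (max (mdot w' x) d') (max (mdot w'' x) d'')) :
    MPConvexP {p : (Fin n → Rmax) × Rmax | u p.1 ≤ p.2} ∧
    ∀ t : EReal, IsClosed {x : Fin n → Rmax | Rmax.toE (u x) ≤ t} := by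
  constructor
  · -- convexity of the epigraph
    intro p hp q hq α β hαβ
    simp only [Set.mem_setOf_eq] at hp hq ⊢
    rw [hu]
    have hA : max (mdot w' fun i => max (α + p.1 i) (β + q.1 i)) d'
        = max (α + max (mdot w' p.1) d') (β + max (mdot w' q.1) d') := by
      rw [mdot_comb, add_max, add_max]
      rw [max_max_max_comm, comb_const d' α β hαβ]
    have hB : max (mdot w'' fun i => max (α + p.1 i) (β + q.1 i)) d''
        = max (α + max (mdot w'' p.1) d'') (β + max (mdot w'' q.1) d'') := by
      rw [mdot_comb, add_max, add_max]
      rw [max_max_max_comm, comb_const d'' α β hαβ]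
    rw [hA, hB]
    refine (rdiff_comb _ _ _ _ α β).trans ?_
    rw [← hu, ← hu]
    exact max_le_max (add_le_add_right hp α) (add_le_add_right hq β)
  · -- closedness of lower level sets
    intro t
    induction t using EReal.rec with
    | top =>
      have : {x : Fin n → Rmax | Rmax.toE (u x) ≤ ⊤} = Set.univ := by
        ext x; simp
      rw [this]; exact isClosed_univ
    | bot =>
      have : {x : Fin n → Rmax | Rmax.toE (u x) ≤ ⊥}
          = {x | max (mdot w' x) d' ≤ max (mdot w'' x) (max d'' ⊥)} := by
        ext x
        simp only [Set.mem_setOf_eq, toE_le_bot, hu, rdiff_le_iff, max_assoc]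
      rw [this]
      exact isClosed_le ((cont_mdot w').max continuous_const)
        ((cont_mdot w'').max continuous_const)
    | coe r =>
      have : {x : Fin n → Rmax | Rmax.toE (u x) ≤ (r : EReal)}
          = {x | max (mdot w' x) d' ≤ max (mdot w'' x) (max d'' (r : Rmax))} := by
        ext x
        simp only [Set.mem_setOf_eq, toE_le_coe, hu, rdiff_le_iff, max_assoc]
      rw [this]
      exact isClosed_le ((cont_mdot w').max continuous_const)
        ((cont_mdot w'').max continuous_const)

end
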